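/- Let x, y₀ ∈ ℝ, let m_t, m_{t−1} ∈ [0,1) with m_{t−1} ≠ 1, let δ_t, δ_{t−1} ≥ 0, set γ = (1−m_t)/(1−m_{t−1}), and assume δ_t ≥ γ²·δ_{t−1}. Then the convolution of (i) the pushforward of the Gaussian measure with mean (1−m_{t−1})·y₀ + m_{t−1}·x and variance δ_{t−1} under the affine map w ↦ γ·w + (m_t − γ·m_{t−1})·x with (ii) the Gaussian measure with mean 0 and variance δ_t − γ²·δ_{t−1} equals the Gaussian measure with mean (1−m_t)·y₀ + m_t·x and variance δ_t. -/

import Mathlib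

open MeasureTheory ProbabilityTheory Real
open scoped NNReal ENNReal

namespace BBDMAux

lemma key_real (v w : ℝ) (hv : 0 < v) (hw : 0 < w) (z x : ℝ) :
    ((Real.sqrt (2 * π * v))⁻¹ * rexp (-(x - 0)^2 / (2 * v))) *
      ((Real.sqrt (2 * π * w))⁻¹ * rexp (-((z - x) - 0)^2 / (2 * w)))
    = ((Real.sqrt (2 * π * (v + w)))⁻¹ * rexp (-(z - 0)^2 / (2 * (v + w)))) *
      ((Real.sqrt (2 * π * (v * w / (v + w))))⁻¹ *
        rexp (-(x - v * z / (v + w))^2 / (2 * (v * w / (v + w))))) := by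
  have hvw : 0 < v + w := by linarith
  have hconst : (Real.sqrt (2 * π * v))⁻¹ * (Real.sqrt (2 * π * w))⁻¹
      = (Real.sqrt (2 * π * (v + w)))⁻¹ * (Real.sqrt (2 * π * (v * w / (v + w))))⁻¹ := by
    rw [← mul_inv, ← mul_inv, ← Real.sqrt_mul (by positivity), ← Real.sqrt_mul (by positivity)]
    congr 1
    congr 1
    field_simp
  have hexp : rexp (-(x - 0)^2 / (2 * v)) * rexp (-((z - x) - 0)^2 / (2 * w))
      = rexp (-(z - 0)^2 / (2 * (v + w))) * rexp (-(x - v * z / (v + w))^2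
          / (2 * (v * w / (v + w)))) := by
    rw [← Real.exp_add, ← Real.exp_add]
    congr 1
    field_simp
    ring
  calc ((Real.sqrt (2 * π * v))⁻¹ * rexp (-(x - 0)^2 / (2 * v))) *
      ((Real.sqrt (2 * π * w))⁻¹ * rexp (-((z - x) - 0)^2 / (2 * w)))
      = ((Real.sqrt (2 * π * v))⁻¹ * (Real.sqrt (2 * π * w))⁻¹) *
        (rexp (-(x - 0)^2 / (2 * v)) * rexp (-((z - x) - 0)^2 / (2 * w))) := by ring
    _ = _ := by rw [hconst, hexp]; ring

lemma key (v w : ℝ≥0) (hv : v ≠ 0) (hw : w ≠ 0) (z x : ℝ) :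
    gaussianPDFReal 0 v x * gaussianPDFReal 0 w (z - x)
      = gaussianPDFReal 0 (v + w) z *
        gaussianPDFReal ((v : ℝ) * z / ((v : ℝ) + w)) (v * w / (v + w)) x := by
  have hv' : (0 : ℝ) < v := lt_of_le_of_ne (v.coe_nonneg) (by exact_mod_cast (Ne.symm hv))
  have hw' : (0 : ℝ) < w := lt_of_le_of_ne (w.coe_nonneg) (by exact_mod_cast (Ne.symm hw))
  simp only [gaussianPDFReal, NNReal.coe_add, NNReal.coe_div, NNReal.coe_mul]
  exact key_real v w hv' hw' z x

lemma conv_pdf (v w : ℝ≥0) (hv : v ≠ 0) (hw : w ≠ 0) (z : ℝ) :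
    ∫⁻ x, gaussianPDF 0 v x * gaussianPDF 0 w (z - x) = gaussianPDF 0 (v + w) z := by
  have hu : v * w / (v + w) ≠ 0 := by
    have : v + w ≠ 0 := by simp [hv]
    simp [div_eq_zero_iff, hv, hw, this]
  have h1 : ∀ x : ℝ, gaussianPDF 0 v x * gaussianPDF 0 w (z - x)
      = gaussianPDF 0 (v + w) z *
        ENNReal.ofReal (gaussianPDFReal ((v : ℝ) * z / ((v : ℝ) + w)) (v * w / (v + w)) x) := by
    intro x
    rw [gaussianPDF, gaussianPDF, gaussianPDF,
      ← ENNReal.ofReal_mul (gaussianPDFReal_nonneg _ _ _), key v w hv hw z x,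
      ENNReal.ofReal_mul (gaussianPDFReal_nonneg _ _ _)]
  simp_rw [h1]
  rw [lintegral_const_mul _ (measurable_gaussianPDFReal _ _).ennreal_ofReal,
    lintegral_gaussianPDFReal_eq_one _ hu, mul_one]

lemma centered_conv (v w : ℝ≥0) :
    (gaussianReal 0 v).conv (gaussianReal 0 w) = gaussianReal 0 (v + w) := by
  rcases eq_or_ne v 0 with rfl | hv
  · simp
  rcases eq_or_ne w 0 with rfl | hw
  · simp
  have hvw : v + w ≠ 0 := by simp [hv]
  ext s hs
  have hadd : Measurable fun p : ℝ × ℝ => p.1 + p.2 := measurable_add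
  rw [Measure.conv, Measure.map_apply hadd hs, Measure.prod_apply (hadd hs)]
  have h1 : ∀ x : ℝ, (gaussianReal 0 w) (Prod.mk x ⁻¹' ((fun p : ℝ × ℝ => p.1 + p.2) ⁻¹' s))
      = ∫⁻ z in s, gaussianPDF 0 w (z - x) := by
    intro x
    have : Prod.mk x ⁻¹' ((fun p : ℝ × ℝ => p.1 + p.2) ⁻¹' s) = (fun y => x + y) ⁻¹' s := rfl
    rw [this, ← Measure.map_apply (measurable_const_add x) hs, gaussianReal_map_const_add,
      zero_add, gaussianReal_apply _ hw s]
    congr 1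
    ext z
    rw [gaussianPDF, gaussianPDF, gaussianPDFReal_sub, zero_add]
  simp_rw [h1]
  have hmeas : Measurable (Function.uncurry fun (a z : ℝ) =>
      gaussianPDF 0 v a * gaussianPDF 0 w (z - a)) := by
    apply Measurable.fun_mul
    · exact ((measurable_gaussianPDFReal 0 v).comp measurable_fst).ennreal_ofReal
    · exact ((measurable_gaussianPDFReal 0 w).comp
        (measurable_snd.sub measurable_fst)).ennreal_ofReal
  have hin : Measurable fun x : ℝ => ∫⁻ z in s, gaussianPDF 0 w (z - x) := by
    apply Measurable.lintegral_prod_right (f := fun (x : ℝ) (z : ℝ) => gaussianPDF 0 w (z - x))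
    exact ((measurable_gaussianPDFReal 0 w).comp (measurable_snd.sub measurable_fst)).ennreal_ofReal
  rw [gaussianReal_of_var_ne_zero _ hv,
    lintegral_withDensity_eq_lintegral_mul _ (measurable_gaussianPDF 0 v) hin]
  simp only [Pi.mul_apply]
  have h2 : ∀ x : ℝ, gaussianPDF 0 v x * ∫⁻ z in s, gaussianPDF 0 w (z - x)
      = ∫⁻ z in s, gaussianPDF 0 v x * gaussianPDF 0 w (z - x) := fun x =>
    (lintegral_const_mul _ (((measurable_gaussianPDFReal 0 w).comp
      (measurable_id.sub_const x)).ennreal_ofReal)).symm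
  simp_rw [h2]
  rw [lintegral_lintegral_swap hmeas.aemeasurable]
  have h3 : ∀ z : ℝ, ∫⁻ x, gaussianPDF 0 v x * gaussianPDF 0 w (z - x)
      = gaussianPDF 0 (v + w) z := fun z => conv_pdf v w hv hw z
  simp_rw [h3]
  rw [← gaussianReal_apply _ hvw s]

lemma conv_map_add (μ ν : Measure ℝ) [SFinite μ] [SFinite ν] (a b : ℝ) :
    (μ.map (· + a)).conv (ν.map (· + b)) = (μ.conv ν).map (· + (a + b)) := by
  rw [Measure.conv, Measure.conv,
    Measure.map_prod_map _ _ (measurable_add_const a) (measurable_add_const b),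
    Measure.map_map measurable_add (Measurable.prodMap (measurable_add_const a)
      (measurable_add_const b)),
    Measure.map_map (measurable_add_const (a + b)) measurable_add]
  congr 1
  ext p
  simp [Prod.map]
  ring

lemma gaussianReal_conv (m₁ m₂ : ℝ) (v w : ℝ≥0) :
    (gaussianReal m₁ v).conv (gaussianReal m₂ w) = gaussianReal (m₁ + m₂) (v + w) := by
  have h1 : gaussianReal m₁ v = (gaussianReal 0 v).map (· + m₁) := by
    rw [gaussianReal_map_add_const, zero_add]
  have h2 : gaussianReal m₂ w = (gaussianReal 0 w).map (· + m₂) := by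
    rw [gaussianReal_map_add_const, zero_add]
  rw [h1, h2, conv_map_add, centered_conv, gaussianReal_map_add_const, zero_add]

end BBDMAux

/-- Consistency of the Brownian-bridge marginal (Eq. (6)) with its one-step transition
(Eq. (7)): convolving the pushforward of `N((1−m_{t−1})·y₀ + m_{t−1}·x, δ_{t−1})` under
`w ↦ γ·w + (m_t − γ·m_{t−1})·x` with `N(0, δ_t − γ²·δ_{t−1})` gives
`N((1−m_t)·y₀ + m_t·x, δ_t)`, where `γ = (1−m_t)/(1−m_{t−1})`. -/
theorem bbdm_marginal_transition_consistency (x y₀ : ℝ) (mt mtm1 : ℝ)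
    (hmt : mt ∈ Set.Ico (0 : ℝ) 1) (hmtm1 : mtm1 ∈ Set.Ico (0 : ℝ) 1) (hm : mtm1 ≠ 1)
    (δt δtm1 : ℝ≥0) (γ : ℝ) (hγ : γ = (1 - mt) / (1 - mtm1))
    (hδ : γ ^ 2 * δtm1 ≤ (δt : ℝ)) :
    (Measure.map (fun w : ℝ => γ * w + (mt - γ * mtm1) * x)
        (gaussianReal ((1 - mtm1) * y₀ + mtm1 * x) δtm1)).conv
        (gaussianReal 0 (δt - ⟨γ ^ 2 * δtm1, by positivity⟩))
      = gaussianReal ((1 - mt) * y₀ + mt * x) δt := by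
  have hmap : (fun w : ℝ => γ * w + (mt - γ * mtm1) * x)
      = (· + (mt - γ * mtm1) * x) ∘ (γ * ·) := rfl
  rw [hmap, ← Measure.map_map (measurable_add_const _) (measurable_const_mul γ),
    gaussianReal_map_const_mul, gaussianReal_map_add_const, BBDMAux.gaussianReal_conv]
  have hle : (⟨γ ^ 2 * δtm1, by positivity⟩ : ℝ≥0) ≤ δt := by
    exact NNReal.coe_le_coe.mp hδ
  congr 1
  · have hne : (1 : ℝ) - mtm1 ≠ 0 := sub_ne_zero.mpr (Ne.symm hm)
    have hγ' : γ * (1 - mtm1) = 1 - mt := by rw [hγ]; field_simp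
    linear_combination y₀ * hγ'
  · refine NNReal.coe_injective ?_
    rw [NNReal.coe_add, NNReal.coe_sub hle]
    simp only [NNReal.coe_mul, NNReal.coe_mk]
    change γ ^ 2 * (δtm1 : ℝ) + ((δt : ℝ) - γ ^ 2 * δtm1) = δt
    ring
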